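/- Let H(n) denote the set of real n×n matrices all of whose eigenvalues (complex roots of the characteristic polynomial) have positive real part. Then the squaring map is injective on H(n): if X₁, X₂ ∈ H(n) and X₁² = X₂², then X₁ = X₂. -/

import Mathlib

open Matrix Polynomial

/-- `z` is a (complex) eigenvalue of the real matrix `S`, i.e. a complex root of its
characteristic polynomial. -/
def eigR {n : ℕ} (S : Matrix (Fin n) (Fin n) ℝ) (z : ℂ) : Prop :=
  (S.charpoly.map (algebraMap ℝ ℂ)).IsRoot z

lemma charpoly_eval_aux {n : ℕ} (M : Matrix (Fin n) (Fin n) ℂ) (z : ℂ) :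
    M.charpoly.eval z = (Matrix.scalar (Fin n) z - M).det := by
  rw [Matrix.charpoly, eval_det, matPolyEquiv_charmatrix]
  simp

lemma mem_spectrum_iff_root {n : ℕ} (M : Matrix (Fin n) (Fin n) ℂ) (z : ℂ) :
    z ∈ spectrum ℂ M ↔ M.charpoly.IsRoot z := by
  rw [spectrum.mem_iff, Polynomial.IsRoot, charpoly_eval_aux]
  have h : (Matrix.scalar (Fin n)) z = algebraMap ℂ (Matrix (Fin n) (Fin n) ℂ) z := rfl
  rw [← h, Matrix.isUnit_iff_isUnit_det, isUnit_iff_ne_zero, not_not]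

lemma aeval_semiconj {A : Type*} [Ring A] [Algebra ℂ A] {a b d : A}
    (h : a * d = d * b) (p : ℂ[X]) :
    Polynomial.aeval a p * d = d * Polynomial.aeval b p := by
  induction p using Polynomial.induction_on' with
  | add p q hp hq => simp [map_add, add_mul, mul_add, hp, hq]
  | monomial k c =>
    have hsc : SemiconjBy d b a := by simpa [SemiconjBy] using h.symm
    have hk := (hsc.pow_right k).eq
    simp only [Polynomial.aeval_monomial]
    rw [mul_assoc, ← hk, ← mul_assoc, Algebra.commutes c d, mul_assoc]

/-- **Injectivity of squaring on `H(n)`.** The squaring map `X ↦ X²` is injective on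
the set of real `n × n` matrices all of whose eigenvalues have positive real part. -/
theorem sq_injOn_halfplane (n : ℕ) :
    Set.InjOn (fun X : Matrix (Fin n) (Fin n) ℝ => X ^ 2)
      {X : Matrix (Fin n) (Fin n) ℝ | ∀ z : ℂ, eigR X z → 0 < z.re} := by
  rcases Nat.eq_zero_or_pos n with hn | hn
  · subst hn
    intro X₁ _ X₂ _ _
    funext i
    exact i.elim0
  intro X₁ hX₁ X₂ hX₂ hsq
  simp only at hsq
  set φ : Matrix (Fin n) (Fin n) ℝ →+* Matrix (Fin n) (Fin n) ℂ := (algebraMap ℝ ℂ).mapMatrix with hφ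
  set A := φ X₁ with hA
  set B := φ X₂ with hB
  have hA2 : A ^ 2 = B ^ 2 := by rw [hA, hB, ← map_pow, ← map_pow, hsq]
  set D := A - B with hD
  have hcomm : A * D = D * (-B) := by
    have h2 : A * A = B * B := by
      have := hA2; rwa [pow_two, pow_two] at this
    simp only [hD, mul_sub, sub_mul, mul_neg, h2]
    abel
  set p := A.charpoly with hp
  have hp_eq : p = X₁.charpoly.map (algebraMap ℝ ℂ) := by
    rw [hp, hA, hφ]; exact Matrix.charpoly_map X₁ (algebraMap ℝ ℂ)
  have hzero : D * Polynomial.aeval (-B) p = 0 := by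
    rw [← aeval_semiconj hcomm p, hp, Matrix.aeval_self_charpoly, zero_mul]
  have hdeg : 0 < p.degree := by
    rw [hp, Matrix.charpoly_degree_eq_dim]
    simpa using hn
  have hunit : IsUnit (Polynomial.aeval (-B) p) := by
    rw [← not_not (a := IsUnit _), ← spectrum.zero_mem_iff ℂ]
    rw [spectrum.map_polynomial_aeval_of_degree_pos (-B) p hdeg]
    rintro ⟨z, hz, hz0⟩
    have hz1 : 0 < z.re := by
      apply hX₁
      rw [eigR, ← hp_eq]
      exact hz0
    have hz2 : 0 < (-z).re := by
      apply hX₂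
      have : -z ∈ spectrum ℂ B := by
        rw [← spectrum.neg_eq] at hz
        simpa using hz
      rw [mem_spectrum_iff_root] at this
      rw [eigR]
      have hBc : B.charpoly = X₂.charpoly.map (algebraMap ℝ ℂ) := by
        rw [hB, hφ, RingHom.mapMatrix_apply]
        exact Matrix.charpoly_map X₂ _
      rwa [← hBc]
    simp only [Complex.neg_re] at hz2
    linarith
  have hD0 : D = 0 := by
    obtain ⟨u, hu⟩ := hunit
    have h1 : D * (u : Matrix (Fin n) (Fin n) ℂ) = 0 := by rw [hu, hzero]
    have h2 : D * ((u : Matrix (Fin n) (Fin n) ℂ) *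
        ((u⁻¹ : (Matrix (Fin n) (Fin n) ℂ)ˣ) : Matrix (Fin n) (Fin n) ℂ)) = 0 := by
      rw [← mul_assoc, h1, zero_mul]
    rw [Units.mul_inv] at h2
    simpa using h2
  have hAB : A = B := by rwa [hD, sub_eq_zero] at hD0
  have : Function.Injective φ := by
    intro M N h
    ext i j
    have h2 : (φ M) i j = (φ N) i j := by rw [h]
    simpa [hφ, RingHom.mapMatrix_apply, Matrix.map_apply] using h2
  exact this hAB
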